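/- For any d ≥ 1 and k ≥ d+2, any two (d,k)-colorings of a path are connected by a reconfiguration sequence; i.e., every instance of (d,k)-coloring reconfiguration on paths with k ≥ d+2 is a yes-instance. -/
import Mathlib


/-- A (d,k)-coloring of the path on `n` vertices `v_0, …, v_{n-1}`
(distance between `v_i` and `v_j` is `|i - j|`). -/
def IsPathDKColoring (n d k : ℕ) (α : Fin n → Fin k) : Prop :=
  ∀ i j : Fin n, i ≠ j → Nat.dist i.val j.val ≤ d → α i ≠ α j

/-- Two colorings differ at exactly one vertex. -/
def OneStep {n k : ℕ} (α β : Fin n → Fin k) : Prop :=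
  ∃ v : Fin n, α v ≠ β v ∧ ∀ w : Fin n, w ≠ v → α w = β w

namespace PathReconfAux

/-- Validity of a coloring of `ℕ` on the prefix `[0, n)`. -/
def Valid (d k n : ℕ) (f : ℕ → Fin k) : Prop :=
  ∀ i j : ℕ, i < n → j < n → i ≠ j → Nat.dist i j ≤ d → f i ≠ f j

/-- One reconfiguration step between prefix colorings. -/
def Stp (d k n : ℕ) (f g : ℕ → Fin k) : Prop :=
  Valid d k n f ∧ Valid d k n g ∧
    ∃ v, v < n ∧ f v ≠ g v ∧ ∀ w, w ≠ v → f w = g w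

lemma Valid.mono {d k n : ℕ} {f : ℕ → Fin k} (h : Valid d k (n + 1) f) :
    Valid d k n f := fun i j hi hj => h i j (by omega) (by omega)

lemma exists_fresh {d k : ℕ} (hk : d + 2 ≤ k) (F : Finset (Fin k))
    (hF : F.card ≤ d + 1) : ∃ c : Fin k, c ∉ F := by
  by_contra h
  push_neg at h
  have : (Finset.univ : Finset (Fin k)).card ≤ F.card :=
    Finset.card_le_card (fun x _ => h x)
  simp [Finset.card_univ] at this
  omega

lemma valid_update {d k n : ℕ} {f : ℕ → Fin k} (hf : Valid d k n f) (c : Fin k)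
    (hc : ∀ j, j < n → Nat.dist j n ≤ d → c ≠ f j) :
    Valid d k (n + 1) (Function.update f n c) := by
  intro i j hi hj hij hdist
  rcases Nat.lt_succ_iff_lt_or_eq.mp hi with hi' | rfl
  · rcases Nat.lt_succ_iff_lt_or_eq.mp hj with hj' | rfl
    · rw [Function.update_of_ne (by omega), Function.update_of_ne (by omega)]
      exact hf i j hi' hj' hij hdist
    · rw [Function.update_of_ne (by omega), Function.update_self]
      exact fun h => hc i hi' hdist h.symm
  · rcases Nat.lt_succ_iff_lt_or_eq.mp hj with hj' | rfl
    · rw [Function.update_self, Function.update_of_ne (by omega)]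
      exact hc j hj' (by rwa [Nat.dist_comm])
    · exact absurd rfl hij

/-- The simulation lemma: a reconfiguration chain on the first `n` vertices can be
lifted to a chain on the first `n+1` vertices, adjusting the color of vertex `n`
as needed. -/
lemma sim {d k : ℕ} (hk : d + 2 ≤ k) (n : ℕ) :
    ∀ {h1 h2 : ℕ → Fin k}, Relation.ReflTransGen (Stp d k n) h1 h2 →
    ∀ c1 : Fin k, Valid d k (n + 1) (Function.update h1 n c1) →
    ∃ c2 : Fin k, Valid d k (n + 1) (Function.update h2 n c2) ∧
      Relation.ReflTransGen (Stp d k (n + 1))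
        (Function.update h1 n c1) (Function.update h2 n c2) := by
  intro h1 h2 hchain
  induction hchain using Relation.ReflTransGen.head_induction_on with
  | refl =>
    intro c1 H1
    exact ⟨c1, H1, Relation.ReflTransGen.refl⟩
  | @head a b hstep hrest IH =>
    intro c1 H1
    obtain ⟨hva, hvb, v, hvn, hne, hagree⟩ := hstep
    by_cases hconf : Nat.dist v n ≤ d ∧ b v = c1
    · -- vertex n blocks the move; recolor it first to a fresh color
      obtain ⟨hd1, hbv⟩ := hconf
      obtain ⟨c', hc'⟩ := exists_fresh hk
        (((Finset.Ico (n - d) n).image a) ∪ {b v})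
        (by
          refine le_trans (Finset.card_union_le _ _) ?_
          have h1 : ((Finset.Ico (n - d) n).image a).card ≤ d := by
            refine le_trans (Finset.card_image_le) ?_
            simp [Nat.card_Ico]; omega
          simp; omega)
      simp only [Finset.mem_union, Finset.mem_image, Finset.mem_singleton,
        Finset.mem_Ico, not_or, not_exists, not_and] at hc'
      obtain ⟨hc'a, hc'bv⟩ := hc'
      have hc'a' : ∀ j, j < n → Nat.dist j n ≤ d → c' ≠ a j := by
        intro j hj hdj heq
        have : n - d ≤ j := by simp [Nat.dist] at hdj; omega
        exact hc'a j ⟨this, hj⟩ heq.symm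
      -- step A: recolor vertex n from c1 to c'
      have HA : Valid d k (n + 1) (Function.update a n c') :=
        valid_update hva c' hc'a'
      have stepA : Stp d k (n + 1) (Function.update a n c1) (Function.update a n c') := by
        refine ⟨H1, HA, n, by omega, ?_, ?_⟩
        · simp only [Function.update_self]
          rw [← hbv]
          exact fun h => hc'bv h.symm
        · intro w hw
          rw [Function.update_of_ne hw, Function.update_of_ne hw]
      -- step B: do the original move at v
      have HB : Valid d k (n + 1) (Function.update b n c') := by
        refine valid_update hvb c' ?_
        intro j hj hdj heq
        by_cases hjv : j = v
        · subst hjv; exact hc'bv heq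
        · rw [← hagree j hjv] at heq; exact hc'a' j hj hdj heq
      have stepB : Stp d k (n + 1) (Function.update a n c') (Function.update b n c') := by
        refine ⟨HA, HB, v, by omega, ?_, ?_⟩
        · rw [Function.update_of_ne (by omega), Function.update_of_ne (by omega)]
          exact hne
        · intro w hw
          by_cases hwn : w = n
          · subst hwn; simp
          · rw [Function.update_of_ne hwn, Function.update_of_ne hwn]
            exact hagree w hw
      obtain ⟨c2, Hc2, hch⟩ := IH c' HB
      exact ⟨c2, Hc2, Relation.ReflTransGen.head stepA
        (Relation.ReflTransGen.head stepB hch)⟩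
    · -- no conflict: do the move directly, keeping color c1 at vertex n
      have Hb : Valid d k (n + 1) (Function.update b n c1) := by
        refine valid_update hvb c1 ?_
        intro j hj hdj heq
        by_cases hjv : j = v
        · subst hjv; exact hconf ⟨hdj, heq.symm⟩
        · rw [← hagree j hjv] at heq
          exact H1 n j (by omega) (by omega) (by omega)
            (by rwa [Nat.dist_comm])
            (by rw [Function.update_self, Function.update_of_ne (by omega)]; exact heq)
      have stepD : Stp d k (n + 1) (Function.update a n c1) (Function.update b n c1) := by
        refine ⟨H1, Hb, v, by omega, ?_, ?_⟩
        · rw [Function.update_of_ne (by omega), Function.update_of_ne (by omega)]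
          exact hne
        · intro w hw
          by_cases hwn : w = n
          · subst hwn; simp
          · rw [Function.update_of_ne hwn, Function.update_of_ne hwn]
            exact hagree w hw
      obtain ⟨c2, Hc2, hch⟩ := IH c1 Hb
      exact ⟨c2, Hc2, Relation.ReflTransGen.head stepD hch⟩

/-- Key connectivity lemma, by induction on the length of the prefix. -/
lemma key {d k : ℕ} (hk : d + 2 ≤ k) :
    ∀ n (f g : ℕ → Fin k), Valid d k n f → Valid d k n g →
      (∀ i, n ≤ i → f i = g i) → Relation.ReflTransGen (Stp d k n) f g := by
  intro n
  induction n with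
  | zero =>
    intro f g _ _ heq
    have : f = g := funext fun i => heq i (Nat.zero_le i)
    rw [this]
  | succ n IH =>
    intro f g hf hg heq
    set g' : ℕ → Fin k := Function.update g n (f n) with hg'def
    have hvg' : Valid d k n g' := by
      intro i j hi hj hij hdist
      simp only [hg'def, Function.update_of_ne (show i ≠ n by omega),
        Function.update_of_ne (show j ≠ n by omega)]
      exact hg i j (by omega) (by omega) hij hdist
    have heq' : ∀ i, n ≤ i → f i = g' i := by
      intro i hi
      rcases eq_or_lt_of_le hi with rfl | hi'
      · simp [hg'def]
      · rw [hg'def, Function.update_of_ne (by omega)]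
        exact heq i (by omega)
    have hchain := IH f g' hf.mono hvg' heq'
    have H1 : Valid d k (n + 1) (Function.update f n (f n)) := by
      rwa [Function.update_eq_self]
    obtain ⟨c2, Hc2, hch⟩ := sim hk n hchain (f n) H1
    rw [Function.update_eq_self] at hch
    have hgg' : Function.update g' n c2 = Function.update g n c2 := by
      simp [hg'def, Function.update_idem]
    rw [hgg'] at hch Hc2
    by_cases hc : c2 = g n
    · rw [hc, Function.update_eq_self] at hch
      exact hch
    · refine hch.tail ?_
      refine ⟨Hc2, hg, n, by omega, ?_, ?_⟩
      · rw [Function.update_self]; exact hc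
      · intro w hw; rw [Function.update_of_ne hw]

/-- Convert a `ReflTransGen` chain into an explicit finite sequence. -/
lemma chainSeq {d k : ℕ} (n : ℕ) :
    ∀ {f g : ℕ → Fin k}, Relation.ReflTransGen (Stp d k n) f g →
    Valid d k n f →
    ∃ (m : ℕ) (S : ℕ → ℕ → Fin k), S 0 = f ∧ S m = g ∧
      (∀ i ≤ m, Valid d k n (S i)) ∧
      (∀ i < m, ∃ v, v < n ∧ S i v ≠ S (i + 1) v ∧
        ∀ w, w ≠ v → S i w = S (i + 1) w) := by
  intro f g hchain
  induction hchain using Relation.ReflTransGen.head_induction_on with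
  | refl =>
    intro hf
    exact ⟨0, fun _ => g, rfl, rfl, fun _ _ => hf, fun i hi => absurd hi (by omega)⟩
  | @head a b hstep hrest IH =>
    intro _
    obtain ⟨m, S, hS0, hSm, hSval, hSstep⟩ := IH hstep.2.1
    refine ⟨m + 1, fun (i : ℕ) => if i = 0 then a else S (i - 1), by simp, by simp [hSm], ?_, ?_⟩
    · intro i hi
      rcases Nat.eq_zero_or_pos i with rfl | hi'
      · simpa using hstep.1
      · show Valid d k n (if i = 0 then a else S (i - 1))
        rw [if_neg (show ¬ i = 0 by omega)]
        exact hSval (i - 1) (by omega)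
    · intro i hi
      rcases Nat.eq_zero_or_pos i with rfl | hi'
      · simp only [if_pos rfl, if_neg (by omega : (0 : ℕ) + 1 ≠ 0)]
        simpa [hS0] using hstep.2.2
      · simp only [if_neg (by omega : i ≠ 0), if_neg (by omega : i + 1 ≠ 0)]
        have h2 : i + 1 - 1 = i - 1 + 1 := by omega
        rw [h2]
        exact hSstep (i - 1) (by omega)

end PathReconfAux

theorem path_reconf_always_yes (n d k : ℕ) (hd : 1 ≤ d) (hk : d + 2 ≤ k)
    (α β : Fin n → Fin k)
    (hα : IsPathDKColoring n d k α) (hβ : IsPathDKColoring n d k β) :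
    ∃ (m : ℕ) (seq : ℕ → Fin n → Fin k),
      seq 0 = α ∧ seq m = β ∧
      (∀ i ≤ m, IsPathDKColoring n d k (seq i)) ∧
      (∀ i < m, OneStep (seq i) (seq (i + 1))) := by
  open PathReconfAux in
  have hk0 : 0 < k := by omega
  let z : Fin k := ⟨0, hk0⟩
  let ext : (Fin n → Fin k) → (ℕ → Fin k) := fun γ i => if h : i < n then γ ⟨i, h⟩ else z
  have hvext : ∀ (γ : Fin n → Fin k), IsPathDKColoring n d k γ → Valid d k n (ext γ) := by
    intro γ hγ i j hi hj hij hdist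
    simp only [ext, dif_pos hi, dif_pos hj]
    exact hγ ⟨i, hi⟩ ⟨j, hj⟩ (by simpa [Fin.ext_iff] using hij) hdist
  have heq : ∀ i, n ≤ i → ext α i = ext β i := by
    intro i hi; simp [ext, dif_neg (by omega : ¬ i < n)]
  have hchain := key hk n (ext α) (ext β) (hvext α hα) (hvext β hβ) heq
  obtain ⟨m, S, hS0, hSm, hSval, hSstep⟩ := chainSeq n hchain (hvext α hα)
  refine ⟨m, fun i x => S i x.val, ?_, ?_, ?_, ?_⟩
  · funext x
    simp [hS0, ext, x.isLt]
  · funext x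
    simp [hSm, ext, x.isLt]
  · intro i hi x y hxy hdist
    exact hSval i hi x.val y.val x.isLt y.isLt
      (by simpa [Fin.ext_iff] using hxy) hdist
  · intro i hi
    obtain ⟨v, hv, hne, hagree⟩ := hSstep i hi
    refine ⟨⟨v, hv⟩, hne, ?_⟩
    intro w hw
    exact hagree w.val (by simpa [Fin.ext_iff] using hw)
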